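/- Euler's Pentagonal Number Theorem: for |q| < 1, ∏_{n=1}^{∞} (1 − q^n) = Σ_{n=−∞}^{∞} (−1)^n q^{n(3n+1)/2}. -/

import Mathlib

open Finset Filter Topology

namespace PentAux

/-- Triangular numbers. -/
def T : ℕ → ℕ
  | 0 => 0
  | j + 1 => T j + (j + 1)

lemma T_succ (j : ℕ) : T (j + 1) = T j + (j + 1) := rfl

lemma two_T (j : ℕ) : 2 * T j = j * (j + 1) := by
  induction j with
  | zero => rfl
  | succ j ih => rw [T_succ]; ring_nf; ring_nf at ih; omega

variable (q : ℂ)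

/-- `G q n j = ∏_{k=j+1}^{n} (1 - q^k)`. -/
def G (n j : ℕ) : ℂ := ∏ k ∈ Finset.Ico j n, (1 - q ^ (k + 1))

lemma G_self (n : ℕ) : G q n n = 1 := by simp [G]

lemma G_succ_top {n j : ℕ} (h : j ≤ n) :
    G q (n + 1) j = G q n j * (1 - q ^ (n + 1)) := Finset.prod_Ico_succ_top h _

lemma G_succ_bot {n j : ℕ} (h : j < n) :
    G q n j = (1 - q ^ (j + 1)) * G q n (j + 1) := Finset.prod_eq_prod_Ico_succ_bot h _

/-- Shanks' partial sums. -/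
noncomputable def f (n : ℕ) : ℂ :=
  ∑ j ∈ range (n + 1), (-1) ^ j * G q n j * q ^ (n * j + T j)

/-- Pentagonal summands, grouped by absolute value of the index. -/
noncomputable def pterm : ℕ → ℂ
  | 0 => 1
  | j + 1 => (-1) ^ (j + 1) *
      (q ^ ((j + 1) * (j + 1) + T j) + q ^ ((j + 1) * (j + 1) + T (j + 1)))

lemma f_succ (n : ℕ) : f q (n + 1) = f q n + pterm q (n + 1) := by
  have key : ∀ j ∈ range (n + 1),
      (-1 : ℂ) ^ j * G q (n + 1) j * q ^ ((n + 1) * j + T j)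
        = (-1 : ℂ) ^ j * G q n j * q ^ ((n + 1) * j + T j)
          - (-1 : ℂ) ^ j * G q n j * q ^ ((n + 1) * (j + 1) + T j) := by
    intro j hj
    rw [mem_range] at hj
    rw [G_succ_top q (by omega)]
    have he : (n + 1) * (j + 1) + T j = ((n + 1) * j + T j) + (n + 1) := by ring
    rw [he, pow_add]
    ring
  have hsplit : f q (n + 1)
      = (∑ j ∈ range (n + 1), ((-1 : ℂ) ^ j * G q n j * q ^ ((n + 1) * j + T j)
          - (-1 : ℂ) ^ j * G q n j * q ^ ((n + 1) * (j + 1) + T j)))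
        + (-1 : ℂ) ^ (n + 1) * G q (n + 1) (n + 1) * q ^ ((n + 1) * (n + 1) + T (n + 1)) := by
    rw [f, Finset.sum_range_succ, Finset.sum_congr rfl key]
  rw [hsplit, Finset.sum_sub_distrib,
    Finset.sum_range_succ' (fun j => (-1 : ℂ) ^ j * G q n j * q ^ ((n + 1) * j + T j)) n,
    Finset.sum_range_succ (fun j => (-1 : ℂ) ^ j * G q n j * q ^ ((n + 1) * (j + 1) + T j)) n]
  have key2 : ∀ j ∈ range n,
      ((-1 : ℂ) ^ (j + 1) * G q n (j + 1) * q ^ ((n + 1) * (j + 1) + T (j + 1)))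
        - (-1 : ℂ) ^ j * G q n j * q ^ ((n + 1) * (j + 1) + T j)
      = (-1 : ℂ) ^ (j + 1) * G q n (j + 1) * q ^ (n * (j + 1) + T (j + 1)) := by
    intro j hj
    rw [mem_range] at hj
    rw [G_succ_bot q (show j < n by omega)]
    have e1 : (n + 1) * (j + 1) + T (j + 1) = (n * (j + 1) + T (j + 1)) + (j + 1) := by
      rw [T_succ]; ring
    have e2 : (n + 1) * (j + 1) + T j = n * (j + 1) + T (j + 1) := by rw [T_succ]; ring
    rw [e1, e2, pow_add]
    ring
  have hAB : (∑ j ∈ range n, (-1 : ℂ) ^ (j + 1) * G q n (j + 1) * q ^ ((n + 1) * (j + 1) + T (j + 1)))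
      - ∑ j ∈ range n, (-1 : ℂ) ^ j * G q n j * q ^ ((n + 1) * (j + 1) + T j)
      = ∑ j ∈ range n, (-1 : ℂ) ^ (j + 1) * G q n (j + 1) * q ^ (n * (j + 1) + T (j + 1)) := by
    rw [← Finset.sum_sub_distrib]
    exact Finset.sum_congr rfl key2
  rw [f, Finset.sum_range_succ'
    (fun j => (-1 : ℂ) ^ j * G q n j * q ^ (n * j + T j)) n]
  rw [G_self, G_self]
  show _ = _ + (-1 : ℂ) ^ (n + 1) *
      (q ^ ((n + 1) * (n + 1) + T n) + q ^ ((n + 1) * (n + 1) + T (n + 1)))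
  linear_combination hAB

lemma f_eq (n : ℕ) : f q n = ∑ j ∈ range (n + 1), pterm q j := by
  induction n with
  | zero => simp [f, pterm, G, T]
  | succ n ih =>
    rw [f_succ, ih, Finset.sum_range_succ, Finset.sum_range_succ, Finset.sum_range_succ]

lemma e_pos (j : ℕ) : (((j : ℤ) * (3 * (j : ℤ) + 1)) / 2).toNat = j * j + T j := by
  have h2 : (2 : ℤ) * (T j : ℤ) = (j : ℤ) * ((j : ℤ) + 1) := by exact_mod_cast two_T j
  have h : ((j : ℤ) * (3 * (j : ℤ) + 1)) = 2 * ((j * j + T j : ℕ) : ℤ) := by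
    push_cast
    linear_combination -h2
  rw [h]
  omega

lemma e_neg (j : ℕ) :
    ((-((j : ℤ) + 1)) * (3 * (-((j : ℤ) + 1)) + 1) / 2).toNat
      = (j + 1) * (j + 1) + T j := by
  have h2 : (2 : ℤ) * (T j : ℤ) = (j : ℤ) * ((j : ℤ) + 1) := by exact_mod_cast two_T j
  have h : (-((j : ℤ) + 1)) * (3 * (-((j : ℤ) + 1)) + 1)
      = 2 * (((j + 1) * (j + 1) + T j : ℕ) : ℤ) := by
    push_cast
    linear_combination -h2
  rw [h]
  omega

lemma zpow_coe (j : ℕ) : ((-1 : ℂ) ^ (j : ℤ)) = (-1 : ℂ) ^ j := zpow_natCast _ _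

lemma zpow_negcoe (j : ℕ) : ((-1 : ℂ) ^ (-(j : ℤ))) = (-1 : ℂ) ^ j := by
  rw [zpow_neg, zpow_natCast, ← inv_pow, inv_neg, inv_one]

section Analytic

variable {q : ℂ} (hq : ‖q‖ < 1)

include hq

lemma factor_ne (n : ℕ) : 1 - q ^ (n + 1) ≠ 0 := by
  intro h
  have h1 : q ^ (n + 1) = 1 := by linear_combination -h
  have h2 : ‖q ^ (n + 1)‖ < 1 := by
    rw [norm_pow]
    exact pow_lt_one₀ (norm_nonneg q) hq (Nat.succ_ne_zero n)
  rw [h1, norm_one] at h2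
  exact lt_irrefl _ h2

lemma geom_sum_le (n : ℕ) : ∑ k ∈ range n, ‖q‖ ^ k ≤ (1 - ‖q‖)⁻¹ := by
  have hs : Summable (fun k : ℕ => ‖q‖ ^ k) := summable_geometric_of_lt_one (norm_nonneg q) hq
  calc ∑ k ∈ range n, ‖q‖ ^ k ≤ ∑' k : ℕ, ‖q‖ ^ k :=
        Summable.sum_le_tsum _ (fun k _ => pow_nonneg (norm_nonneg q) k) hs
    _ = (1 - ‖q‖)⁻¹ := tsum_geometric_of_lt_one (norm_nonneg q) hq

lemma norm_G_le (n j : ℕ) : ‖G q n j‖ ≤ Real.exp ((1 - ‖q‖)⁻¹) := by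
  rw [G, norm_prod]
  calc ∏ k ∈ Finset.Ico j n, ‖1 - q ^ (k + 1)‖
      ≤ ∏ k ∈ Finset.Ico j n, Real.exp (‖q‖ ^ (k + 1)) := by
        apply Finset.prod_le_prod (fun k _ => norm_nonneg _)
        intro k _
        calc ‖1 - q ^ (k + 1)‖ ≤ ‖(1 : ℂ)‖ + ‖q ^ (k + 1)‖ := norm_sub_le _ _
          _ = ‖q‖ ^ (k + 1) + 1 := by rw [norm_one, norm_pow]; ring
          _ ≤ Real.exp (‖q‖ ^ (k + 1)) := Real.add_one_le_exp _
    _ = Real.exp (∑ k ∈ Finset.Ico j n, ‖q‖ ^ (k + 1)) := (Real.exp_sum _ _).symm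
    _ ≤ Real.exp ((1 - ‖q‖)⁻¹) := by
        apply Real.exp_le_exp.2
        calc ∑ k ∈ Finset.Ico j n, ‖q‖ ^ (k + 1)
            ≤ ∑ k ∈ Finset.Ico j n, ‖q‖ ^ k := by
              apply Finset.sum_le_sum
              intro k _
              exact pow_le_pow_of_le_one (norm_nonneg q) hq.le (Nat.le_succ k)
          _ ≤ ∑ k ∈ range n, ‖q‖ ^ k := by
              apply Finset.sum_le_sum_of_subset_of_nonneg
              · intro x hx
                rw [Finset.mem_Ico] at hx
                exact Finset.mem_range.2 hx.2
              · intro k _ _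
                exact pow_nonneg (norm_nonneg q) k
          _ ≤ (1 - ‖q‖)⁻¹ := geom_sum_le hq n

lemma f_sub_G_tendsto : Tendsto (fun n => f q n - G q n 0) atTop (𝓝 0) := by
  set C : ℝ := Real.exp ((1 - ‖q‖)⁻¹) with hC
  have hCpos : 0 ≤ C := Real.exp_nonneg _
  have hkey : ∀ n : ℕ, ‖f q n - G q n 0‖ ≤ C * (1 - ‖q‖)⁻¹ * ‖q‖ ^ n := by
    intro n
    have hfn : f q n - G q n 0
        = ∑ j ∈ range n, (-1 : ℂ) ^ (j + 1) * G q n (j + 1) * q ^ (n * (j + 1) + T (j + 1)) := by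
      rw [f, Finset.sum_range_succ' (fun j => (-1 : ℂ) ^ j * G q n j * q ^ (n * j + T j)) n]
      simp [T]
    rw [hfn]
    have step1 : ‖∑ j ∈ range n, (-1 : ℂ) ^ (j + 1) * G q n (j + 1) * q ^ (n * (j + 1) + T (j + 1))‖
        ≤ ∑ j ∈ range n, C * ‖q‖ ^ (n + j) := by
      apply norm_sum_le_of_le
      intro j hj
      rw [Finset.mem_range] at hj
      rw [norm_mul, norm_mul, norm_pow, norm_pow, norm_neg, norm_one, one_pow, one_mul]
      have h1 : ‖q‖ ^ (n * (j + 1) + T (j + 1)) ≤ ‖q‖ ^ (n + j) := by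
        apply pow_le_pow_of_le_one (norm_nonneg q) hq.le
        have hn1 : 1 ≤ n := by omega
        calc n + j ≤ n * (j + 1) := by nlinarith
          _ ≤ n * (j + 1) + T (j + 1) := Nat.le_add_right _ _
      exact mul_le_mul (norm_G_le hq n (j + 1)) h1 (pow_nonneg (norm_nonneg q) _) hCpos
    have step2 : ∑ j ∈ range n, C * ‖q‖ ^ (n + j)
        = C * ‖q‖ ^ n * ∑ j ∈ range n, ‖q‖ ^ j := by
      rw [Finset.mul_sum]
      apply Finset.sum_congr rfl
      intro j _
      rw [pow_add]
      ring
    have step3 : C * ‖q‖ ^ n * ∑ j ∈ range n, ‖q‖ ^ j ≤ C * (1 - ‖q‖)⁻¹ * ‖q‖ ^ n := by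
      have h2 := mul_le_mul_of_nonneg_left (geom_sum_le hq n)
        (mul_nonneg hCpos (pow_nonneg (norm_nonneg q) n))
      calc C * ‖q‖ ^ n * ∑ j ∈ range n, ‖q‖ ^ j ≤ C * ‖q‖ ^ n * (1 - ‖q‖)⁻¹ := h2
        _ = C * (1 - ‖q‖)⁻¹ * ‖q‖ ^ n := by ring
    calc ‖∑ j ∈ range n, (-1 : ℂ) ^ (j + 1) * G q n (j + 1) * q ^ (n * (j + 1) + T (j + 1))‖
        ≤ ∑ j ∈ range n, C * ‖q‖ ^ (n + j) := step1
      _ = C * ‖q‖ ^ n * ∑ j ∈ range n, ‖q‖ ^ j := step2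
      _ ≤ C * (1 - ‖q‖)⁻¹ * ‖q‖ ^ n := step3
  apply squeeze_zero_norm hkey
  have := (tendsto_pow_atTop_nhds_zero_of_lt_one (norm_nonneg q) hq).const_mul
    (C * (1 - ‖q‖)⁻¹)
  simpa using this

lemma multipliable_pent : Multipliable fun n : ℕ => 1 - q ^ (n + 1) := by
  have hlog : Summable fun n : ℕ => Complex.log (1 - q ^ (n + 1)) := by
    apply Summable.of_norm_bounded_eventually_nat (g := fun n => 3 / 2 * ‖q‖ ^ (n + 1))
    · exact ((summable_nat_add_iff 1).2
        (summable_geometric_of_lt_one (norm_nonneg q) hq)).mul_left _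
    · have htt : Tendsto (fun n : ℕ => ‖q‖ ^ (n + 1)) atTop (𝓝 0) :=
        (tendsto_pow_atTop_nhds_zero_of_lt_one (norm_nonneg q) hq).comp
          (tendsto_add_atTop_nat 1)
      filter_upwards [htt.eventually_le_const (by norm_num : (0 : ℝ) < 1 / 2)] with n hn
      have h1 : (1 : ℂ) - q ^ (n + 1) = 1 + -(q ^ (n + 1)) := by ring
      rw [h1]
      calc ‖Complex.log (1 + -(q ^ (n + 1)))‖ ≤ 3 / 2 * ‖-(q ^ (n + 1))‖ :=
            Complex.norm_log_one_add_half_le_self (by rwa [norm_neg, norm_pow])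
        _ = 3 / 2 * ‖q‖ ^ (n + 1) := by rw [norm_neg, norm_pow]
  exact Complex.multipliable_of_summable_log hlog

omit hq in
lemma exp_toNat_ge (m : ℤ) : m.natAbs ≤ (m * (3 * m + 1) / 2).toNat := by
  have hdvd : 2 ∣ m * (3 * m + 1) := by
    rcases Int.even_or_odd m with ⟨k, hk⟩ | ⟨k, hk⟩
    · exact ⟨k * (3 * m + 1), by rw [hk]; ring⟩
    · exact ⟨m * (3 * k + 2), by rw [hk]; ring⟩
  obtain ⟨c, hc⟩ := hdvd
  have hge : (m.natAbs : ℤ) ≤ m * (3 * m + 1) / 2 := by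
    rw [hc, Int.mul_ediv_cancel_left _ two_ne_zero]
    rcases le_or_gt 0 m with hm | hm
    · rw [Int.natAbs_of_nonneg hm]
      nlinarith [sq_nonneg m, hm]
    · rw [Int.ofNat_natAbs_of_nonpos hm.le]
      nlinarith [mul_nonneg (neg_nonneg.2 (by omega : m + 1 ≤ 0)) (neg_nonneg.2 hm.le)]
  omega

lemma summable_pent :
    Summable fun n : ℤ => (-1 : ℂ) ^ n * q ^ (n * (3 * n + 1) / 2).toNat := by
  have hgeo : Summable (fun n : ℕ => ‖q‖ ^ n) :=
    summable_geometric_of_lt_one (norm_nonneg q) hq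
  have key : ∀ m : ℤ, ‖(-1 : ℂ) ^ m * q ^ (m * (3 * m + 1) / 2).toNat‖ ≤ ‖q‖ ^ m.natAbs := by
    intro m
    rw [norm_mul, norm_zpow, norm_neg, norm_one, one_zpow, one_mul, norm_pow]
    exact pow_le_pow_of_le_one (norm_nonneg q) hq.le (exp_toNat_ge m)
  apply Summable.of_nat_of_neg
  · apply Summable.of_norm_bounded hgeo
    intro n
    simpa using key n
  · apply Summable.of_norm_bounded hgeo
    intro n
    simpa using key (-n)

omit hq in
lemma Icc_succ (n : ℕ) :
    Finset.Icc (-((n : ℤ) + 1)) ((n : ℤ) + 1)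
      = insert (-((n : ℤ) + 1)) (insert ((n : ℤ) + 1)
          (Finset.Icc (-(n : ℤ)) (n : ℤ))) := by
  ext x
  simp only [Finset.mem_Icc, Finset.mem_insert]
  omega

omit hq in
lemma Icc_sum_eq (n : ℕ) :
    ∑ i ∈ Finset.Icc (-(n : ℤ)) (n : ℤ),
        (-1 : ℂ) ^ i * q ^ (i * (3 * i + 1) / 2).toNat
      = ∑ j ∈ range (n + 1), pterm q j := by
  induction n with
  | zero =>
    norm_num [pterm]
  | succ n ih =>
    have hcast : ((n + 1 : ℕ) : ℤ) = (n : ℤ) + 1 := by push_cast; ring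
    rw [hcast, Icc_succ, Finset.sum_insert, Finset.sum_insert, ih,
      Finset.sum_range_succ (fun j => pterm q j) (n + 1)]
    · have hpos : (-1 : ℂ) ^ ((n : ℤ) + 1) *
          q ^ (((n : ℤ) + 1) * (3 * ((n : ℤ) + 1) + 1) / 2).toNat
          = (-1 : ℂ) ^ (n + 1) * q ^ ((n + 1) * (n + 1) + T (n + 1)) := by
        rw [show ((n : ℤ) + 1) = ((n + 1 : ℕ) : ℤ) from by push_cast; ring, zpow_coe]
        rw [e_pos (n + 1)]
      have hneg : (-1 : ℂ) ^ (-((n : ℤ) + 1)) *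
          q ^ ((-((n : ℤ) + 1)) * (3 * (-((n : ℤ) + 1)) + 1) / 2).toNat
          = (-1 : ℂ) ^ (n + 1) * q ^ ((n + 1) * (n + 1) + T n) := by
        rw [e_neg, show (-((n : ℤ) + 1)) = -(((n + 1 : ℕ) : ℤ)) from by push_cast; ring,
          zpow_negcoe]
      rw [hpos, hneg,
        show pterm q (n + 1) = (-1 : ℂ) ^ (n + 1) *
          (q ^ ((n + 1) * (n + 1) + T n) + q ^ ((n + 1) * (n + 1) + T (n + 1))) from rfl]
      ring
    · simp only [Finset.mem_Icc]
      omega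
    · simp only [Finset.mem_insert, Finset.mem_Icc]
      omega

lemma tendsto_prod : Tendsto (fun n : ℕ => G q n 0) atTop
    (𝓝 (∏' n : ℕ, (1 - q ^ (n + 1)))) := by
  have h := (multipliable_pent hq).hasProd.tendsto_prod_nat
  apply h.congr
  intro n
  rw [G, Finset.range_eq_Ico]

lemma tendsto_sum : Tendsto (fun n : ℕ => ∑ j ∈ range (n + 1), pterm q j) atTop
    (𝓝 (∑' n : ℤ, (-1 : ℂ) ^ n * q ^ (n * (3 * n + 1) / 2).toNat)) := by
  have hIcc : Tendsto (fun n : ℕ => Finset.Icc (-(n : ℤ)) (n : ℤ)) atTop atTop := by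
    apply tendsto_atTop_finset_of_monotone
    · intro a b hab
      apply Finset.Icc_subset_Icc <;> · omega
    · intro x
      refine ⟨x.natAbs, ?_⟩
      simp only [Finset.mem_Icc]
      omega
  have h := ((summable_pent hq).hasSum.comp hIcc)
  apply h.congr
  intro n
  exact Icc_sum_eq n

end Analytic

end PentAux

/-- Euler's Pentagonal Number Theorem. -/
theorem pentagonal_number_theorem (q : ℂ) (hq : ‖q‖ < 1) :
    (∏' n : ℕ, (1 - q ^ (n + 1))) =
      ∑' n : ℤ, (-1 : ℂ) ^ n * q ^ (n * (3 * n + 1) / 2).toNat := by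
  have h1 : Tendsto (fun n : ℕ => PentAux.f q n) atTop
      (𝓝 (∏' n : ℕ, (1 - q ^ (n + 1)))) := by
    have := (PentAux.tendsto_prod hq).add (PentAux.f_sub_G_tendsto hq)
    simpa using this
  have h2 : Tendsto (fun n : ℕ => PentAux.f q n) atTop
      (𝓝 (∑' n : ℤ, (-1 : ℂ) ^ n * q ^ (n * (3 * n + 1) / 2).toNat)) := by
    apply (PentAux.tendsto_sum hq).congr
    intro n
    exact (PentAux.f_eq q n).symm
  exact tendsto_nhds_unique h1 h2
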